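/- Let Φ_σ denote the CDF of a Gaussian with mean 0 and variance σ². Let φ_G(x) = x + ε with ε_i i.i.d. N(0, σ²), and let ζ : ℝ^d → {0,1}^d be the coordinatewise thresholding ζ(w)_i = 1 if w_i > 0.5 else 0. Then for any x ∈ {0,1}^d, the random vector ζ(φ_G(x)) has the same distribution as the discrete randomization φ_D(x) on {0,1}^d with K = 1 and α = Φ_σ(0.5), i.e., each coordinate of ζ(φ_G(x)) independently equals x_i with probability Φ_σ(0.5) and 1 − x_i with probability 1 − Φ_σ(0.5). -/
import Mathlib

open MeasureTheory ProbabilityTheory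
open scoped NNReal ENNReal

lemma g_meas : Measurable (fun t : ℝ => decide ((1:ℝ)/2 < t)) := by
  apply measurable_to_countable'
  intro b
  cases b
  · convert measurableSet_Iic (a := (1:ℝ)/2) using 1
    ext t; simp
  · convert measurableSet_Ioi (a := (1:ℝ)/2) using 1
    ext t; simp

lemma coord (σ : ℝ≥0) (hσ : 0 < σ) (b : Bool) :
    Measure.map (fun t : ℝ => decide ((1:ℝ)/2 < t))
        (gaussianReal (if b then 1 else 0) (σ ^ 2))
      = gaussianReal 0 (σ ^ 2) (Set.Iic (1 / 2)) • Measure.dirac b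
          + (1 - gaussianReal 0 (σ ^ 2) (Set.Iic (1 / 2))) • Measure.dirac (!b) := by
  have hv : (σ ^ 2 : ℝ≥0) ≠ 0 := by positivity
  set α := gaussianReal 0 (σ ^ 2) (Set.Iic (1 / 2)) with hα
  -- no atoms
  have hsing : ∀ a : ℝ, gaussianReal 0 (σ^2) {a} = 0 := fun a =>
    gaussianReal_absolutelyContinuous 0 hv (measure_singleton a)
  have hIio : gaussianReal 0 (σ^2) (Set.Iio (1/2)) = α := by
    rw [hα, show Set.Iic ((1:ℝ)/2) = Set.Iio (1/2) ∪ {1/2} by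
      ext t; simp [le_iff_lt_or_eq],
      measure_union (by simp) (measurableSet_singleton _), hsing, add_zero]
  have hIoi : gaussianReal 0 (σ^2) (Set.Ioi (1/2)) = 1 - α := by
    rw [← Set.compl_Iic, prob_compl_eq_one_sub measurableSet_Iic]
  -- symmetry: gaussianReal 0 v (Ioi (-1/2)) = α
  have hneg : Measure.map (fun t : ℝ => (-1) * t) (gaussianReal 0 (σ^2)) = gaussianReal 0 (σ^2) := by
    rw [gaussianReal_map_const_mul]
    norm_num
  have hsym : gaussianReal 0 (σ^2) (Set.Ioi (-(1/2) : ℝ)) = α := by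
    conv_lhs => rw [← hneg]
    rw [Measure.map_apply (measurable_const_mul _) measurableSet_Ioi]
    have : (fun t : ℝ => (-1) * t) ⁻¹' Set.Ioi (-(1/2)) = Set.Iio (1/2) := by
      ext t; simp only [Set.mem_preimage, Set.mem_Ioi, Set.mem_Iio]; constructor <;> intro h <;> linarith
    rw [this, hIio]
  have h1 : gaussianReal (1 : ℝ) (σ^2) = Measure.map (· + 1) (gaussianReal 0 (σ^2)) := by
    rw [gaussianReal_map_add_const]; norm_num
  have hIoi1 : gaussianReal (1:ℝ) (σ^2) (Set.Ioi (1/2)) = α := by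
    rw [h1, Measure.map_apply (measurable_add_const 1) measurableSet_Ioi]
    have : (· + (1:ℝ)) ⁻¹' Set.Ioi (1/2) = Set.Ioi (-(1/2)) := by
      ext t; simp; constructor <;> intro h <;> linarith
    rw [this, hsym]
  have hIic1 : gaussianReal (1:ℝ) (σ^2) (Set.Iic (1/2)) = 1 - α := by
    have := prob_compl_eq_one_sub (μ := gaussianReal (1:ℝ) (σ^2)) (measurableSet_Iic (a := (1:ℝ)/2))
    rw [Set.compl_Iic, hIoi1] at this
    rw [this]
    exact (ENNReal.sub_sub_cancel ENNReal.one_ne_top prob_le_one).symm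
  -- now the map computation
  refine Measure.ext_of_singleton fun a => ?_
  rw [Measure.map_apply g_meas (MeasurableSet.singleton a)]
  have htrue : (fun t : ℝ => decide ((1:ℝ)/2 < t)) ⁻¹' {true} = Set.Ioi (1/2) := by
    ext t; simp
  have hfalse : (fun t : ℝ => decide ((1:ℝ)/2 < t)) ⁻¹' {false} = Set.Iic (1/2) := by
    ext t; simp
  cases b <;> cases a <;>
    simp_all [Measure.add_apply, Measure.smul_apply, smul_eq_mul]

theorem stmt_13 (d : ℕ) (σ : ℝ≥0) (hσ : 0 < σ) (x : Fin d → Bool) :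
    Measure.map (fun w : Fin d → ℝ => fun i => decide ((1 : ℝ) / 2 < w i))
        (Measure.pi fun i =>
          gaussianReal (if x i then 1 else 0) (σ ^ 2))
      = Measure.pi fun i =>
          gaussianReal 0 (σ ^ 2) (Set.Iic (1 / 2)) • Measure.dirac (x i)
            + (1 - gaussianReal 0 (σ ^ 2) (Set.Iic (1 / 2)))
                • Measure.dirac (!x i) := by
  set α := gaussianReal 0 (σ ^ 2) (Set.Iic (1 / 2)) with hα
  set ν : Fin d → Measure Bool := fun i => α • Measure.dirac (x i) + (1 - α) • Measure.dirac (!x i)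
    with hν
  have hfin : ∀ i, IsFiniteMeasure (ν i) := by
    intro i
    constructor
    simp only [hν, Measure.add_apply, Measure.smul_apply, smul_eq_mul,
      measure_univ, mul_one]
    exact lt_of_le_of_lt (add_le_add prob_le_one tsub_le_self) (by norm_num)
  have hmeas : Measurable (fun w : Fin d → ℝ => fun i => decide ((1 : ℝ) / 2 < w i)) :=
    measurable_pi_lambda _ fun i => g_meas.comp (measurable_pi_apply i)
  haveI : ∀ i, SigmaFinite (ν i) := fun i => @IsFiniteMeasure.toSigmaFinite _ _ _ (hfin i)
  refine (Measure.pi_eq (μ := ν) fun s hs => ?_).symm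
  rw [Measure.map_apply hmeas (MeasurableSet.univ_pi hs)]
  have hpre : (fun w : Fin d → ℝ => fun i => decide ((1 : ℝ) / 2 < w i)) ⁻¹'
      Set.pi Set.univ s = Set.pi Set.univ fun i => (fun t : ℝ => decide ((1:ℝ)/2 < t)) ⁻¹' s i := by
    ext w; simp [Set.mem_pi]
  rw [hpre, Measure.pi_pi]
  refine Finset.prod_congr rfl fun i _ => ?_
  rw [← Measure.map_apply g_meas (hs i), coord σ hσ (x i)]
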